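/- For nonnegative measurable functions u, v on ℝ^N vanishing at infinity, Hardy–Littlewood inequality: ∫ u v dx ≤ ∫ u* v* dx, where u*, v* are the Schwarz symmetrizations. -/

import Mathlib

open MeasureTheory

/-- The open ball centered at the origin in `ℝ^N` with prescribed volume `v`. -/
noncomputable def symmBall (N : ℕ) (v : ENNReal) : Set (EuclideanSpace ℝ (Fin N)) :=
  Metric.ball 0
    ((v.toReal /
        (volume (Metric.ball (0 : EuclideanSpace ℝ (Fin N)) 1)).toReal) ^ ((1 : ℝ) / N))

/-- The symmetrized set `S*` of a set `S ⊆ ℝ^N`: the ball of the same measure. -/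
noncomputable def symmSet (N : ℕ) (S : Set (EuclideanSpace ℝ (Fin N))) :
    Set (EuclideanSpace ℝ (Fin N)) :=
  symmBall N (volume S)

/-- The Schwarz symmetrization of `u : ℝ^N → ℝ`:
`u*(x) = sup {κ : x ∈ ({u ≥ κ})*}`. -/
noncomputable def schwarzSymm (N : ℕ)
    (u : EuclideanSpace ℝ (Fin N) → ℝ) (x : EuclideanSpace ℝ (Fin N)) : ℝ :=
  sSup {κ : ℝ | x ∈ symmSet N {y | κ ≤ u y}}

section HLAux

open Metric Set Filter Topology
open scoped ENNReal

variable {N : ℕ}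

lemma hl_omega_pos (N : ℕ) :
    (0:ℝ) < (volume (ball (0 : EuclideanSpace ℝ (Fin N)) 1)).toReal :=
  ENNReal.toReal_pos (measure_ball_pos _ _ one_pos).ne' measure_ball_lt_top.ne

lemma hl_volume_symmBall (hN : 1 ≤ N) {V : ℝ≥0∞} (hV : V ≠ ⊤) :
    volume (symmBall N V) = V := by
  haveI : Nonempty (Fin N) := ⟨⟨0, hN⟩⟩
  haveI : Nontrivial (EuclideanSpace ℝ (Fin N)) := inferInstance
  have hc := hl_omega_pos N
  set c := (volume (ball (0 : EuclideanSpace ℝ (Fin N)) 1)).toReal with hcdef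
  have hr : (0:ℝ) ≤ (V.toReal / c) ^ ((1:ℝ)/N) :=
    Real.rpow_nonneg (div_nonneg ENNReal.toReal_nonneg hc.le) _
  rw [symmBall, Measure.addHaar_ball _ _ hr, finrank_euclideanSpace_fin]
  have hNne : (N:ℝ) ≠ 0 := Nat.cast_ne_zero.mpr (by omega)
  have : ((V.toReal / c) ^ ((1:ℝ)/N)) ^ N = V.toReal / c := by
    rw [← Real.rpow_natCast (_ ^ ((1:ℝ)/N)) N,
      ← Real.rpow_mul (div_nonneg ENNReal.toReal_nonneg hc.le)]
    rw [one_div, inv_mul_cancel₀ hNne, Real.rpow_one]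
  rw [this, ENNReal.ofReal_div_of_pos hc, ENNReal.ofReal_toReal hV,
    hcdef, ENNReal.ofReal_toReal measure_ball_lt_top.ne,
    ENNReal.div_mul_cancel (measure_ball_pos _ _ one_pos).ne' measure_ball_lt_top.ne]

lemma hl_symmBall_mono (hN : 1 ≤ N) {V₁ V₂ : ℝ≥0∞} (h : V₁ ≤ V₂) (hV₂ : V₂ ≠ ⊤) :
    symmBall N V₁ ⊆ symmBall N V₂ := by
  apply ball_subset_ball
  have hc := hl_omega_pos N
  have ht : V₁.toReal ≤ V₂.toReal := ENNReal.toReal_mono hV₂ h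
  have h1N : (0:ℝ) ≤ (1:ℝ)/N := by positivity
  exact Real.rpow_le_rpow (div_nonneg ENNReal.toReal_nonneg hc.le)
    (by gcongr) h1N

lemma hl_symmBall_top (hN : 1 ≤ N) : symmBall N ⊤ = ∅ := by
  have hNne : ((1:ℝ)/N) ≠ 0 := by
    have : (N:ℝ) ≠ 0 := Nat.cast_ne_zero.mpr (by omega)
    positivity
  rw [symmBall, ENNReal.toReal_top, zero_div, Real.zero_rpow hNne, ball_zero]

lemma hl_inter_le (hN : 1 ≤ N) {A B : Set (EuclideanSpace ℝ (Fin N))}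
    (hA : volume A ≠ ⊤) (hB : volume B ≠ ⊤) :
    volume (A ∩ B) ≤ volume (symmSet N A ∩ symmSet N B) := by
  rcases le_total (volume A) (volume B) with h | h
  · have hsub : symmSet N A ⊆ symmSet N B := hl_symmBall_mono hN h hB
    rw [symmSet, symmSet] at hsub ⊢
    rw [inter_eq_left.mpr hsub, hl_volume_symmBall hN hA]
    exact measure_mono inter_subset_left
  · have hsub : symmSet N B ⊆ symmSet N A := hl_symmBall_mono hN h hA
    rw [symmSet, symmSet] at hsub ⊢
    rw [inter_eq_right.mpr hsub, hl_volume_symmBall hN hB]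
    exact measure_mono inter_subset_right

lemma hl_volume_univ (hN : 1 ≤ N) :
    volume (univ : Set (EuclideanSpace ℝ (Fin N))) = ⊤ := by
  haveI : Nonempty (Fin N) := ⟨⟨0, hN⟩⟩
  haveI : Nontrivial (EuclideanSpace ℝ (Fin N)) := inferInstance
  exact MeasureTheory.measure_univ_of_isAddLeftInvariant volume

lemma hl_mem_pos (hN : 1 ≤ N) {u : EuclideanSpace ℝ (Fin N) → ℝ} (hu0 : ∀ x, 0 ≤ u x)
    {x : EuclideanSpace ℝ (Fin N)} {κ : ℝ} (hκ : x ∈ symmSet N {y | κ ≤ u y}) : 0 < κ := by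
  by_contra hκ0
  push_neg at hκ0
  have huniv : {y | κ ≤ u y} = univ := eq_univ_of_forall fun y => le_trans hκ0 (hu0 y)
  rw [symmSet, huniv, hl_volume_univ hN, hl_symmBall_top hN] at hκ
  exact hκ

lemma hl_schwarz_nonneg (hN : 1 ≤ N) {u : EuclideanSpace ℝ (Fin N) → ℝ} (hu0 : ∀ x, 0 ≤ u x)
    (x : EuclideanSpace ℝ (Fin N)) : 0 ≤ schwarzSymm N u x :=
  Real.sSup_nonneg fun _ hκ => (hl_mem_pos hN hu0 hκ).le

lemma hl_bddAbove (hN : 1 ≤ N) {u : EuclideanSpace ℝ (Fin N) → ℝ}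
    (hu : Measurable u)
    (huvanish : ∀ κ : ℝ, 0 < κ → volume {y | κ ≤ u y} < ⊤)
    {x : EuclideanSpace ℝ (Fin N)} (hx : x ≠ 0) :
    BddAbove {κ : ℝ | x ∈ symmSet N {y | κ ≤ u y}} := by
  have hc := hl_omega_pos N
  set c := (volume (ball (0 : EuclideanSpace ℝ (Fin N)) 1)).toReal with hcdef
  set A : ℕ → Set (EuclideanSpace ℝ (Fin N)) := fun n => {y | (n:ℝ) + 1 ≤ u y} with hA
  have hanti : Antitone A := by
    intro n m h y hy
    simp only [hA, mem_setOf_eq] at hy ⊢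
    have : (n:ℝ) ≤ m := Nat.cast_le.mpr h
    linarith
  have hiInter : ⋂ n, A n = ∅ := by
    ext y
    simp only [mem_iInter, mem_empty_iff_false, iff_false, not_forall]
    obtain ⟨n, hn⟩ := exists_nat_gt (u y)
    exact ⟨n, by simp only [hA, mem_setOf_eq]; push_neg; linarith⟩
  have htend : Tendsto (fun n => volume (A n)) atTop (𝓝 0) := by
    have := tendsto_measure_iInter_atTop (μ := volume) (s := A)
      (fun n => ((hu measurableSet_Ici).nullMeasurableSet :
        NullMeasurableSet (A n) volume)) hanti
      ⟨0, by simp only [hA]; push_cast; simpa using (huvanish 1 one_pos).ne⟩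
    rwa [hiInter, measure_empty] at this
  have htoReal : Tendsto (fun n => (volume (A n)).toReal) atTop (𝓝 0) := by
    have h := (ENNReal.tendsto_toReal (by simp)).comp htend
    simpa [Function.comp_def] using h
  have hxpos : (0:ℝ) < ‖x‖ ^ N * c := by
    have : (0:ℝ) < ‖x‖ := norm_pos_iff.mpr hx
    positivity
  obtain ⟨n, hn⟩ := (htoReal.eventually_lt_const hxpos).exists
  refine ⟨(n:ℝ) + 1, fun κ hκ => ?_⟩
  by_contra hgt
  push_neg at hgt
  have hsub : {y | κ ≤ u y} ⊆ A n := fun y hy => le_trans hgt.le hy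
  have hfin : volume (A n) ≠ ⊤ := by
    apply (huvanish ((n:ℝ)+1) (by positivity)).ne
  have hVle : (volume {y | κ ≤ u y}).toReal ≤ (volume (A n)).toReal :=
    ENNReal.toReal_mono hfin (measure_mono hsub)
  have hmem : ‖x‖ < ((volume {y | κ ≤ u y}).toReal / c) ^ ((1:ℝ)/N) := by
    have h2 : x ∈ symmSet N {y | κ ≤ u y} := hκ
    unfold symmSet symmBall at h2
    rwa [mem_ball_zero_iff] at h2
  have hlt : ((volume {y | κ ≤ u y}).toReal / c) ^ ((1:ℝ)/N) ≤ ‖x‖ := by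
    have h1 : (volume {y | κ ≤ u y}).toReal / c < ‖x‖ ^ N := by
      rw [div_lt_iff₀ hc]
      exact lt_of_le_of_lt hVle hn
    have h2 : ((volume {y | κ ≤ u y}).toReal / c) ^ ((1:ℝ)/N) ≤ (‖x‖ ^ N) ^ ((1:ℝ)/N) :=
      Real.rpow_le_rpow (div_nonneg ENNReal.toReal_nonneg hc.le) h1.le (by positivity)
    have h3 : (‖x‖ ^ N : ℝ) ^ ((1:ℝ)/N) = ‖x‖ := by
      rw [← Real.rpow_natCast ‖x‖ N, ← Real.rpow_mul (norm_nonneg x)]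
      rw [mul_one_div, div_self (Nat.cast_ne_zero.mpr (by omega : N ≠ 0)), Real.rpow_one]
    rw [h3] at h2
    exact h2
  exact absurd hmem (not_lt.mpr hlt)

lemma hl_le_schwarz (hN : 1 ≤ N) {u : EuclideanSpace ℝ (Fin N) → ℝ}
    (hu : Measurable u)
    (huvanish : ∀ κ : ℝ, 0 < κ → volume {y | κ ≤ u y} < ⊤)
    {x : EuclideanSpace ℝ (Fin N)} (hx : x ≠ 0) {s : ℝ}
    (hs : x ∈ symmSet N {y | s ≤ u y}) : s ≤ schwarzSymm N u x :=
  le_csSup (hl_bddAbove hN hu huvanish hx) hs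

end HLAux

open Metric Set Filter Topology Function
open scoped ENNReal

/-- Hardy–Littlewood inequality: for nonnegative measurable `u, v` on `ℝ^N`
vanishing at infinity, `∫ u v ≤ ∫ u* v*`. -/
theorem hardy_littlewood_inequality
    (N : ℕ) (hN : 1 ≤ N)
    (u v : EuclideanSpace ℝ (Fin N) → ℝ)
    (hu : Measurable u) (hv : Measurable v)
    (hu0 : ∀ x, 0 ≤ u x) (hv0 : ∀ x, 0 ≤ v x)
    (huvanish : ∀ κ : ℝ, 0 < κ → volume {y | κ ≤ u y} < ⊤)
    (hvvanish : ∀ κ : ℝ, 0 < κ → volume {y | κ ≤ v y} < ⊤) :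
    ∫⁻ x, ENNReal.ofReal (u x * v x) ≤
      ∫⁻ x, ENNReal.ofReal (schwarzSymm N u x * schwarzSymm N v x) := by
  classical
  haveI : Nonempty (Fin N) := ⟨⟨0, hN⟩⟩
  haveI : Nontrivial (EuclideanSpace ℝ (Fin N)) := inferInstance
  set c := (volume (ball (0 : EuclideanSpace ℝ (Fin N)) 1)).toReal with hcdef
  set ru : ℝ → ℝ := fun s => ((volume {y | s ≤ u y}).toReal / c) ^ ((1:ℝ)/N) with hrudef
  set rv : ℝ → ℝ := fun t => ((volume {y | t ≤ v y}).toReal / c) ^ ((1:ℝ)/N) with hrvdef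
  have hVu : Antitone (fun s : ℝ => volume {y | s ≤ u y}) :=
    fun s t h => measure_mono fun y hy => le_trans h hy
  have hVv : Antitone (fun t : ℝ => volume {y | t ≤ v y}) :=
    fun s t h => measure_mono fun y hy => le_trans h hy
  have hrpow : Measurable (fun a : ℝ => a ^ ((1:ℝ)/N)) :=
    (Real.continuous_rpow_const (by positivity)).measurable
  have hru_meas : Measurable ru :=
    hrpow.comp ((hVu.measurable.ennreal_toReal).div_const c)
  have hrv_meas : Measurable rv :=
    hrpow.comp ((hVv.measurable.ennreal_toReal).div_const c)
  set I : Set ℝ := Ioi 0 with hI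
  set μI : Measure ℝ := volume.restrict I with hμI
  set π : Measure (ℝ × ℝ) := μI.prod μI with hπ
  -- `ofReal` as an integral of an indicator over `(0,∞)`
  have hofReal : ∀ a : ℝ, 0 ≤ a →
      ENNReal.ofReal a = ∫⁻ s, (Iic a).indicator (fun _ => (1:ℝ≥0∞)) s ∂μI := by
    intro a ha
    have h1 : (∫⁻ s, (Iic a).indicator (fun _ => (1:ℝ≥0∞)) s ∂μI) = μI (Iic a) :=
      lintegral_indicator_one measurableSet_Iic
    rw [h1, hμI, Measure.restrict_apply measurableSet_Iic]
    have : Iic a ∩ I = Ioc 0 a := by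
      ext t; simp [hI, mem_Ioc, and_comm]
    rw [this, Real.volume_Ioc, sub_zero]
  -- indicator product lemma
  have hind : ∀ (A B : Set (EuclideanSpace ℝ (Fin N))) (x),
      A.indicator (fun _ => (1:ℝ≥0∞)) x * B.indicator (fun _ => (1:ℝ≥0∞)) x
        = (A ∩ B).indicator (fun _ => (1:ℝ≥0∞)) x := by
    intro A B x
    by_cases h1 : x ∈ A <;> by_cases h2 : x ∈ B <;>
      simp [Set.indicator_apply, h1, h2]
  -- superlevel sets are measurable
  have hAu : ∀ s : ℝ, MeasurableSet {y | s ≤ u y} := fun s => hu measurableSet_Ici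
  have hBv : ∀ t : ℝ, MeasurableSet {y | t ≤ v y} := fun t => hv measurableSet_Ici
  have hsymm_u : ∀ s : ℝ, symmSet N {y | s ≤ u y} = ball (0 : EuclideanSpace ℝ (Fin N)) (ru s) :=
    fun s => rfl
  have hsymm_v : ∀ t : ℝ, symmSet N {y | t ≤ v y} = ball (0 : EuclideanSpace ℝ (Fin N)) (rv t) :=
    fun t => rfl
  calc
    ∫⁻ x, ENNReal.ofReal (u x * v x)
      = ∫⁻ x, ∫⁻ p, (Iic (u x)).indicator (fun _ => (1:ℝ≥0∞)) p.1
          * (Iic (v x)).indicator (fun _ => (1:ℝ≥0∞)) p.2 ∂π := by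
        refine lintegral_congr fun x => ?_
        rw [ENNReal.ofReal_mul (hu0 x), hofReal _ (hu0 x), hofReal _ (hv0 x), hπ,
          lintegral_prod_mul
            ((measurable_const.indicator measurableSet_Iic).aemeasurable)
            ((measurable_const.indicator measurableSet_Iic).aemeasurable)]
    _ = ∫⁻ p, ∫⁻ x, (Iic (u x)).indicator (fun _ => (1:ℝ≥0∞)) p.1
          * (Iic (v x)).indicator (fun _ => (1:ℝ≥0∞)) p.2 ∂volume ∂π := by
        apply lintegral_lintegral_swap
        have hs1 : MeasurableSet {q : EuclideanSpace ℝ (Fin N) × ℝ × ℝ | q.2.1 ≤ u q.1} :=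
          measurableSet_le (measurable_fst.comp measurable_snd) (hu.comp measurable_fst)
        have hs2 : MeasurableSet {q : EuclideanSpace ℝ (Fin N) × ℝ × ℝ | q.2.2 ≤ v q.1} :=
          measurableSet_le (measurable_snd.comp measurable_snd) (hv.comp measurable_fst)
        have he : (uncurry fun (x : EuclideanSpace ℝ (Fin N)) (p : ℝ × ℝ) =>
            (Iic (u x)).indicator (fun _ => (1:ℝ≥0∞)) p.1
              * (Iic (v x)).indicator (fun _ => (1:ℝ≥0∞)) p.2)
            = fun q => {q : EuclideanSpace ℝ (Fin N) × ℝ × ℝ | q.2.1 ≤ u q.1}.indicator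
                (fun _ => (1:ℝ≥0∞)) q
              * {q : EuclideanSpace ℝ (Fin N) × ℝ × ℝ | q.2.2 ≤ v q.1}.indicator
                (fun _ => (1:ℝ≥0∞)) q := by
          ext q
          by_cases h1 : q.2.1 ≤ u q.1 <;> by_cases h2 : q.2.2 ≤ v q.1 <;>
            simp [uncurry, Set.indicator_apply, h1, h2]
        rw [he]
        exact ((measurable_const.indicator hs1).mul
          (measurable_const.indicator hs2)).aemeasurable
    _ = ∫⁻ p, volume ({y | p.1 ≤ u y} ∩ {y | p.2 ≤ v y}) ∂π := by
        refine lintegral_congr fun p => ?_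
        have : ∀ x, (Iic (u x)).indicator (fun _ => (1:ℝ≥0∞)) p.1
            * (Iic (v x)).indicator (fun _ => (1:ℝ≥0∞)) p.2
            = ({y | p.1 ≤ u y} ∩ {y | p.2 ≤ v y}).indicator (fun _ => (1:ℝ≥0∞)) x := by
          intro x
          by_cases h1 : p.1 ≤ u x <;> by_cases h2 : p.2 ≤ v x <;>
            simp [Set.indicator_apply, h1, h2]
        simp only [this]
        exact lintegral_indicator_one ((hAu p.1).inter (hBv p.2))
    _ ≤ ∫⁻ p, volume (symmSet N {y | p.1 ≤ u y} ∩ symmSet N {y | p.2 ≤ v y}) ∂π := by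
        apply lintegral_mono_ae
        have hprod : π = ((volume : Measure ℝ).prod volume).restrict (I ×ˢ I) := by
          rw [hπ, hμI, Measure.prod_restrict]
        have hae : ∀ᵐ p : ℝ × ℝ ∂π, p ∈ I ×ˢ I := by
          rw [hprod]
          exact ae_restrict_mem (measurableSet_Ioi.prod measurableSet_Ioi)
        filter_upwards [hae] with p hp
        exact hl_inter_le hN (huvanish p.1 hp.1).ne (hvvanish p.2 hp.2).ne
    _ = ∫⁻ p, ∫⁻ x, (ball (0 : EuclideanSpace ℝ (Fin N)) (ru p.1)).indicator
          (fun _ => (1:ℝ≥0∞)) x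
          * (ball (0 : EuclideanSpace ℝ (Fin N)) (rv p.2)).indicator
          (fun _ => (1:ℝ≥0∞)) x ∂volume ∂π := by
        refine lintegral_congr fun p => ?_
        rw [hsymm_u, hsymm_v, ← lintegral_indicator_one
          (measurableSet_ball.inter measurableSet_ball)]
        exact lintegral_congr fun x => (hind _ _ x).symm
    _ = ∫⁻ x, ∫⁻ p, (ball (0 : EuclideanSpace ℝ (Fin N)) (ru p.1)).indicator
          (fun _ => (1:ℝ≥0∞)) x
          * (ball (0 : EuclideanSpace ℝ (Fin N)) (rv p.2)).indicator
          (fun _ => (1:ℝ≥0∞)) x ∂π ∂volume := by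
        symm
        apply lintegral_lintegral_swap
        have hs1 : MeasurableSet {q : EuclideanSpace ℝ (Fin N) × ℝ × ℝ | ‖q.1‖ < ru q.2.1} :=
          measurableSet_lt (measurable_fst.norm)
            (hru_meas.comp (measurable_fst.comp measurable_snd))
        have hs2 : MeasurableSet {q : EuclideanSpace ℝ (Fin N) × ℝ × ℝ | ‖q.1‖ < rv q.2.2} :=
          measurableSet_lt (measurable_fst.norm)
            (hrv_meas.comp (measurable_snd.comp measurable_snd))
        have he : (uncurry fun (x : EuclideanSpace ℝ (Fin N)) (p : ℝ × ℝ) =>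
            (ball (0 : EuclideanSpace ℝ (Fin N)) (ru p.1)).indicator (fun _ => (1:ℝ≥0∞)) x
              * (ball (0 : EuclideanSpace ℝ (Fin N)) (rv p.2)).indicator (fun _ => (1:ℝ≥0∞)) x)
            = fun q => {q : EuclideanSpace ℝ (Fin N) × ℝ × ℝ | ‖q.1‖ < ru q.2.1}.indicator
                (fun _ => (1:ℝ≥0∞)) q
              * {q : EuclideanSpace ℝ (Fin N) × ℝ × ℝ | ‖q.1‖ < rv q.2.2}.indicator
                (fun _ => (1:ℝ≥0∞)) q := by
          ext q
          by_cases h1 : ‖q.1‖ < ru q.2.1 <;> by_cases h2 : ‖q.1‖ < rv q.2.2 <;>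
            simp [uncurry, Set.indicator_apply, mem_ball_zero_iff, h1, h2]
        rw [he]
        exact ((measurable_const.indicator hs1).mul
          (measurable_const.indicator hs2)).aemeasurable
    _ = ∫⁻ x, (∫⁻ s, (ball (0 : EuclideanSpace ℝ (Fin N)) (ru s)).indicator
          (fun _ => (1:ℝ≥0∞)) x ∂μI)
          * ∫⁻ t, (ball (0 : EuclideanSpace ℝ (Fin N)) (rv t)).indicator
          (fun _ => (1:ℝ≥0∞)) x ∂μI := by
        refine lintegral_congr fun x => ?_
        have e1 : (fun s => (ball (0 : EuclideanSpace ℝ (Fin N)) (ru s)).indicator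
            (fun _ => (1:ℝ≥0∞)) x) = fun s => (ru ⁻¹' (Ioi ‖x‖)).indicator
            (fun _ => (1:ℝ≥0∞)) s := by
          ext s
          by_cases h1 : ‖x‖ < ru s <;>
            simp [Set.indicator_apply, mem_ball_zero_iff, h1]
        have e2 : (fun t => (ball (0 : EuclideanSpace ℝ (Fin N)) (rv t)).indicator
            (fun _ => (1:ℝ≥0∞)) x) = fun t => (rv ⁻¹' (Ioi ‖x‖)).indicator
            (fun _ => (1:ℝ≥0∞)) t := by
          ext t
          by_cases h1 : ‖x‖ < rv t <;>
            simp [Set.indicator_apply, mem_ball_zero_iff, h1]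
        rw [hπ]
        rw [lintegral_prod_mul (f := fun s => (ball (0 : EuclideanSpace ℝ (Fin N)) (ru s)).indicator
            (fun _ => (1:ℝ≥0∞)) x)
          (g := fun t => (ball (0 : EuclideanSpace ℝ (Fin N)) (rv t)).indicator
            (fun _ => (1:ℝ≥0∞)) x) ?_ ?_]
        · rw [e1]
          exact (measurable_const.indicator (hru_meas measurableSet_Ioi)).aemeasurable
        · rw [e2]
          exact (measurable_const.indicator (hrv_meas measurableSet_Ioi)).aemeasurable
    _ ≤ ∫⁻ x, ENNReal.ofReal (schwarzSymm N u x) * ENNReal.ofReal (schwarzSymm N v x) := by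
        apply lintegral_mono_ae
        have hae0 : ∀ᵐ x : EuclideanSpace ℝ (Fin N) ∂volume, x ≠ 0 := by
          rw [ae_iff]
          simp only [ne_eq, not_not, setOf_eq_eq_singleton]
          exact measure_singleton 0
        filter_upwards [hae0] with x hx
        have key : ∀ (w : EuclideanSpace ℝ (Fin N) → ℝ) (hw : Measurable w)
            (hw0 : ∀ y, 0 ≤ w y)
            (hwv : ∀ κ : ℝ, 0 < κ → volume {y | κ ≤ w y} < ⊤),
            (∫⁻ s, (ball (0 : EuclideanSpace ℝ (Fin N))
              (((volume {y | s ≤ w y}).toReal / c) ^ ((1:ℝ)/N))).indicator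
              (fun _ => (1:ℝ≥0∞)) x ∂μI) ≤ ENNReal.ofReal (schwarzSymm N w x) := by
          intro w hw hw0 hwv
          set rw' : ℝ → ℝ := fun s => ((volume {y | s ≤ w y}).toReal / c) ^ ((1:ℝ)/N) with hrw
          have hrw_meas : Measurable rw' := by
            have hVw : Antitone (fun s : ℝ => volume {y | s ≤ w y}) :=
              fun s t h => measure_mono fun y hy => le_trans h hy
            exact ((Real.continuous_rpow_const (by positivity)).measurable).comp
              ((hVw.measurable.ennreal_toReal).div_const c)
          have e1 : (fun s => (ball (0 : EuclideanSpace ℝ (Fin N)) (rw' s)).indicator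
              (fun _ => (1:ℝ≥0∞)) x) = fun s => (rw' ⁻¹' (Ioi ‖x‖)).indicator
              (fun _ => (1:ℝ≥0∞)) s := by
            ext s
            by_cases h1 : ‖x‖ < rw' s <;>
              simp [Set.indicator_apply, mem_ball_zero_iff, h1]
          have h1 : (∫⁻ s, (rw' ⁻¹' (Ioi ‖x‖)).indicator (fun _ => (1:ℝ≥0∞)) s ∂μI)
              = μI (rw' ⁻¹' (Ioi ‖x‖)) :=
            lintegral_indicator_one (hrw_meas measurableSet_Ioi)
          rw [e1, h1, hμI, Measure.restrict_apply (hrw_meas measurableSet_Ioi)]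
          have hsub : rw' ⁻¹' (Ioi ‖x‖) ∩ I ⊆ Ioc 0 (schwarzSymm N w x) := by
            rintro s ⟨hs1, hs2⟩
            have hmem : x ∈ symmSet N {y | s ≤ w y} := by
              unfold symmSet symmBall
              rw [mem_ball_zero_iff]
              exact hs1
            exact ⟨hs2, hl_le_schwarz hN hw hwv hx hmem⟩
          calc volume (rw' ⁻¹' (Ioi ‖x‖) ∩ I)
              ≤ volume (Ioc 0 (schwarzSymm N w x)) := measure_mono hsub
            _ = ENNReal.ofReal (schwarzSymm N w x) := by
                rw [Real.volume_Ioc, sub_zero]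
        exact mul_le_mul' (key u hu hu0 huvanish) (key v hv hv0 hvvanish)
    _ = ∫⁻ x, ENNReal.ofReal (schwarzSymm N u x * schwarzSymm N v x) :=
        lintegral_congr fun x =>
          (ENNReal.ofReal_mul (hl_schwarz_nonneg hN hu0 x)).symm
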